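/- Let r, r' ∈ ℝ, let w be the solution of the Cauchy problem w'' + (y/2)·w' + (r − 1/2)·w = 0 on (0,∞) with w(0) = 0, w'(0) = 1, define ψ(t,z) := e^{−z}·t^{1/2 + r' − r}·w(z/√t), and set ũ(t,x) := ψ(t, x − 2t + r'·ln t). Then for all t > 0 and all x with z := x − 2t + r'·ln t ≥ 0, one has the exact identity ∂ₜũ(t,x) − ∂ₓₓũ(t,x) − ũ(t,x) = (r'·e^{−z}/t^{1 + r − r'})·w'(z/√t). -/

import Mathlib

open Real Filter

noncomputable section

/-- `w` solves the Cauchy problem `w'' + (y/2) w' + (r - 1/2) w = 0` on `(0,∞)`,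
with `w(0) = 0` and `w'(0) = 1`. -/
def SolvesLinODE (w : ℝ → ℝ) (r : ℝ) : Prop :=
  (∀ y : ℝ, DifferentiableAt ℝ w y ∧ DifferentiableAt ℝ (deriv w) y) ∧
  (∀ y : ℝ, 0 < y →
    deriv (deriv w) y + (y / 2) * deriv w y + (r - 1 / 2) * w y = 0) ∧
  w 0 = 0 ∧ deriv w 0 = 1

open Topology in
lemma secondDeriv_zero_of_solves {w : ℝ → ℝ} {r : ℝ} (hw : SolvesLinODE w r) :
    deriv (deriv w) 0 = 0 := by
  obtain ⟨hdiff, hode, hw0, hw'0⟩ := hw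
  have hlim : Tendsto (fun y => deriv (deriv w) y) (𝓝[>] (0:ℝ)) (𝓝 0) := by
    have hc : Tendsto (fun y => -(y/2) * deriv w y - (r - 1/2) * w y) (𝓝[>] (0:ℝ)) (𝓝 0) := by
      have h1 : ContinuousAt (fun y => -(y/2) * deriv w y - (r - 1/2) * w y) 0 := by
        exact (((continuousAt_id.div_const 2).neg.mul (hdiff 0).2.continuousAt).sub
          (continuousAt_const.mul (hdiff 0).1.continuousAt))
      have h2 := h1.continuousWithinAt (s := Set.Ioi (0:ℝ))
      simpa [ContinuousWithinAt, hw0, hw'0] using h2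
    refine hc.congr' ?_
    filter_upwards [self_mem_nhdsWithin] with y hy
    have := hode y hy
    linarith
  have h1 : HasDerivWithinAt (deriv w) 0 (Set.Ici 0) 0 :=
    hasDerivWithinAt_Ici_of_tendsto_deriv (s := Set.Ioi 0)
      (fun y _ => ((hdiff y).2).differentiableWithinAt)
      ((hdiff 0).2.continuousAt.continuousWithinAt) self_mem_nhdsWithin hlim
  have h2 : HasDerivWithinAt (deriv w) (deriv (deriv w) 0) (Set.Ici 0) 0 :=
    ((hdiff 0).2.hasDerivAt).hasDerivWithinAt
  have e1 := h1.derivWithin (uniqueDiffOn_Ici (0:ℝ) 0 Set.self_mem_Ici)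
  have e2 := h2.derivWithin (uniqueDiffOn_Ici (0:ℝ) 0 Set.self_mem_Ici)
  rw [← e2]; exact e1


/-- Exact identity for the ansatz `ũ(t,x) = ψ(t, x - 2t + r' ln t)`, where
`ψ(t,z) = e^{-z} t^{1/2 + r' - r} w(z/√t)`. -/
theorem ansatz_identity
    (r r' : ℝ) (w : ℝ → ℝ) (hw : SolvesLinODE w r)
    (ψ : ℝ → ℝ → ℝ)
    (hψ : ∀ t z : ℝ, ψ t z =
      Real.exp (-z) * t ^ (1 / 2 + r' - r) * w (z / Real.sqrt t))
    (util : ℝ → ℝ → ℝ)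
    (hutil : ∀ t x : ℝ, util t x = ψ t (x - 2 * t + r' * Real.log t)) :
    ∀ t : ℝ, 0 < t → ∀ x : ℝ, 0 ≤ x - 2 * t + r' * Real.log t →
      deriv (fun s => util s x) t - deriv (deriv (fun y => util t y)) x - util t x
        = r' * Real.exp (-(x - 2 * t + r' * Real.log t)) / t ^ (1 + r - r')
            * deriv w ((x - 2 * t + r' * Real.log t) / Real.sqrt t) := by
  have hw''0 : deriv (deriv w) 0 = 0 := secondDeriv_zero_of_solves hw
  obtain ⟨hdiff, hode, hw0, hw'0⟩ := hw
  intro t ht x hz0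
  set a : ℝ := 1/2 + r' - r with ha
  set z := x - 2 * t + r' * Real.log t with hzdef
  set s := Real.sqrt t with hsdef
  have hs : 0 < s := Real.sqrt_pos.mpr ht
  have hs2 : s * s = t := Real.mul_self_sqrt ht.le
  set y := z / s with hy
  -- time derivative
  have hA : HasDerivAt (fun σ => util σ x)
      ((Real.exp (-z) * -(-2 + r' * t⁻¹) * t ^ a + Real.exp (-z) * (a * t ^ (a - 1))) * w y
        + Real.exp (-z) * t ^ a
          * (deriv w y * (((-2 + r' * t⁻¹) * s - z * (1 / (2 * s))) / s ^ 2))) t := by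
    have hEq : (fun σ => util σ x) = fun σ =>
        Real.exp (-(x - 2*σ + r' * Real.log σ)) * σ ^ a
          * w ((x - 2*σ + r' * Real.log σ) / Real.sqrt σ) := by
      funext σ; rw [hutil, hψ]
    rw [hEq]
    have hg : HasDerivAt (fun σ => x - 2*σ + r' * Real.log σ) (-2 + r' * t⁻¹) t := by
      have h1 : HasDerivAt (fun σ : ℝ => x - 2*σ) (-2 : ℝ) t := by
        simpa using ((hasDerivAt_id t).const_mul (2:ℝ)).const_sub x
      exact h1.add ((Real.hasDerivAt_log ht.ne').const_mul r')
    have hexp : HasDerivAt (fun σ => Real.exp (-(x - 2*σ + r' * Real.log σ)))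
        (Real.exp (-z) * -(-2 + r' * t⁻¹)) t := hg.neg.exp
    have hpow : HasDerivAt (fun σ : ℝ => σ ^ a) (a * t ^ (a - 1)) t :=
      Real.hasDerivAt_rpow_const (Or.inl ht.ne')
    have hsq : HasDerivAt Real.sqrt (1 / (2 * s)) t := Real.hasDerivAt_sqrt ht.ne'
    have hq : HasDerivAt (fun σ => (x - 2*σ + r' * Real.log σ) / Real.sqrt σ)
        (((-2 + r' * t⁻¹) * s - z * (1 / (2 * s))) / s ^ 2) t := hg.div hsq hs.ne'
    have hwc : HasDerivAt (fun σ => w ((x - 2*σ + r' * Real.log σ) / Real.sqrt σ))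
        (deriv w y * (((-2 + r' * t⁻¹) * s - z * (1 / (2 * s))) / s ^ 2)) t :=
      ((hdiff y).1.hasDerivAt).comp t hq
    exact (hexp.mul hpow).mul hwc
  -- first spatial derivative, as a function
  have hD1 : ∀ x' : ℝ, HasDerivAt (fun xx => util t xx)
      (Real.exp (-(x' - 2*t + r' * Real.log t)) * -1 * t ^ a
          * w ((x' - 2*t + r' * Real.log t) / s)
        + Real.exp (-(x' - 2*t + r' * Real.log t)) * t ^ a
          * (deriv w ((x' - 2*t + r' * Real.log t) / s) * (1 / s))) x' := by
    intro x'
    have hEq : (fun xx => util t xx) = fun xx =>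
        Real.exp (-(xx - 2*t + r' * Real.log t)) * t ^ a
          * w ((xx - 2*t + r' * Real.log t) / s) := by
      funext xx; rw [hutil, hψ]
    rw [hEq]
    have h1 : HasDerivAt (fun xx : ℝ => xx - 2*t + r' * Real.log t) 1 x' := by
      simpa using ((hasDerivAt_id x').sub_const (2*t)).add_const (r' * Real.log t)
    have hexp2 : HasDerivAt (fun xx => Real.exp (-(xx - 2*t + r' * Real.log t)))
        (Real.exp (-(x' - 2*t + r' * Real.log t)) * -1) x' := by
      simpa using h1.neg.exp
    have hq2 : HasDerivAt (fun xx => (xx - 2*t + r' * Real.log t) / s) (1 / s) x' := by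
      simpa using h1.div_const s
    have hwc2 : HasDerivAt (fun xx => w ((xx - 2*t + r' * Real.log t) / s))
        (deriv w ((x' - 2*t + r' * Real.log t) / s) * (1 / s)) x' :=
      ((hdiff _).1.hasDerivAt).comp x' hq2
    exact (hexp2.mul_const (t ^ a)).mul hwc2
  have hDfun : deriv (fun xx => util t xx) = fun x' =>
      Real.exp (-(x' - 2*t + r' * Real.log t)) * t ^ a
        * (deriv w ((x' - 2*t + r' * Real.log t) / s) * (1/s)
            - w ((x' - 2*t + r' * Real.log t) / s)) := by
    funext x'
    rw [(hD1 x').deriv]; ring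
  -- second spatial derivative
  have hB : HasDerivAt (fun x' =>
      Real.exp (-(x' - 2*t + r' * Real.log t)) * t ^ a
        * (deriv w ((x' - 2*t + r' * Real.log t) / s) * (1/s)
            - w ((x' - 2*t + r' * Real.log t) / s)))
      (Real.exp (-z) * -1 * t ^ a * (deriv w y * (1/s) - w y)
        + Real.exp (-z) * t ^ a
          * (deriv (deriv w) y * (1/s) * (1/s) - deriv w y * (1/s))) x := by
    have h1 : HasDerivAt (fun xx : ℝ => xx - 2*t + r' * Real.log t) 1 x := by
      simpa using ((hasDerivAt_id x).sub_const (2*t)).add_const (r' * Real.log t)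
    have hexp2 : HasDerivAt (fun xx => Real.exp (-(xx - 2*t + r' * Real.log t)))
        (Real.exp (-z) * -1) x := h1.neg.exp
    have hq2 : HasDerivAt (fun xx => (xx - 2*t + r' * Real.log t) / s) (1 / s) x := by
      simpa using h1.div_const s
    have hw1 : HasDerivAt (fun xx => w ((xx - 2*t + r' * Real.log t) / s))
        (deriv w y * (1/s)) x := ((hdiff y).1.hasDerivAt).comp x hq2
    have hw2' : HasDerivAt (fun xx => deriv w ((xx - 2*t + r' * Real.log t) / s))
        (deriv (deriv w) y * (1/s)) x := by
        have := ((hdiff y).2.hasDerivAt).comp x hq2; exact this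
    have hin : HasDerivAt (fun xx =>
        deriv w ((xx - 2*t + r' * Real.log t) / s) * (1/s)
          - w ((xx - 2*t + r' * Real.log t) / s))
        (deriv (deriv w) y * (1/s) * (1/s) - deriv w y * (1/s)) x :=
      (hw2'.mul_const (1/s)).sub hw1
    exact (hexp2.mul_const (t ^ a)).mul hin
  -- assemble
  rw [hA.deriv, hDfun, hB.deriv, hutil, hψ, ← hzdef, ← hsdef, ← hy]
  -- eliminate the second derivative of w via the ODE
  have hEy : deriv (deriv w) y = -(y/2) * deriv w y - (r - 1/2) * w y := by
    rcases eq_or_lt_of_le hz0 with h|h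
    · have hy0 : y = 0 := by rw [hy, ← h, zero_div]
      rw [hy0, hw''0, hw0]; ring
    · have hypos : 0 < y := div_pos h hs
      have := hode y hypos; linarith
  rw [hEy]
  -- rpow bookkeeping
  have hPpos : (0:ℝ) < t ^ a := Real.rpow_pos_of_pos ht a
  have hP1 : t ^ (a - 1) = t ^ a / t := by rw [Real.rpow_sub ht, Real.rpow_one]
  have h32 : t ^ ((3:ℝ)/2) = t * s := by
    rw [show (3:ℝ)/2 = 1 + 1/2 by norm_num, Real.rpow_add ht, Real.rpow_one, hsdef,
      Real.sqrt_eq_rpow]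
  have hP2 : t ^ (1 + r - r') = t * s / t ^ a := by
    rw [show (1 + r - r') = (3:ℝ)/2 - a by rw [ha]; ring, Real.rpow_sub ht, h32]
  rw [hP1, hP2]
  have hzy : z = y * s := by rw [hy, div_mul_cancel₀ _ hs.ne']
  set P := t ^ a with hP
  have hP0 : P ≠ 0 := hPpos.ne'
  have hs0 : s ≠ 0 := hs.ne'
  clear_value a z s y P
  rw [ha, hzy, ← hs2]
  field_simp
  ring
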